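/- Finite de Finetti theorem: let X_1,...,X_n be exchangeable random variables with values in a finite alphabet A of size m, with n a multiple of k, 2 ≤ k ≤ (n/100)^{1/3}. Let μ be the law of the empirical measure P̂_{X_1^n} on the simplex, P_k the law of (X_1,...,X_k), and M_{μ,k}(x_1^k) = ∫ Q^k(x_1^k) dμ(Q). Then D(P_k‖M_{μ,k}) ≤ 2δ + k e^{−(n/k)δ} (n/k + 1)^{2m^k} log n, where α = [2k/√n · ((1+2k)/√n + 1)]^{1/2} and δ = α log(m^k/α). -/

import Mathlib

open scoped Classical BigOperators

/-- The empirical PMF (type) of a string `x ∈ A^n`. -/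
noncomputable def empPMF {A : Type*} [Fintype A] (n : ℕ) (x : Fin n → A) (a : A) : ℝ :=
  ((Finset.univ.filter (fun i : Fin n => x i = a)).card : ℝ) / n

/-- Relative entropy (natural log), finite-sum form. -/
noncomputable def relEnt {B : Type*} [Fintype B] (P Q : B → ℝ) : ℝ :=
  ∑ b, P b * Real.log (P b / Q b)


lemma card_high (n k : ℕ) (hkn : k ≤ n) :
    Fintype.card {j : Fin n // k ≤ j.val} = n - k := by
  have e : {j : Fin n // k ≤ j.val} ≃ Fin (n - k) :=
    { toFun := fun j => ⟨j.1.val - k, by omega⟩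
      invFun := fun m => ⟨⟨k + m.val, by omega⟩, by simp⟩
      left_inv := fun j => by
        ext
        simp
        omega
      right_inv := fun m => by
        ext
        simp }
  rw [Fintype.card_congr e, Fintype.card_fin]

lemma card_fix_le (n k : ℕ) (hkn : k ≤ n) :
    (Finset.univ.filter (fun σ : Equiv.Perm (Fin n) =>
      ∀ i : Fin k, σ (Fin.castLE hkn i) = Fin.castLE hkn i)).card ≤ Nat.factorial (n - k) := by
  classical
  set Sub := {j : Fin n // k ≤ j.val}
  have good : ∀ σ : Equiv.Perm (Fin n),
      (∀ i : Fin k, σ (Fin.castLE hkn i) = Fin.castLE hkn i) →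
      ∀ j : Sub, k ≤ (σ j.1).val := by
    intro σ h j
    by_contra hc
    push_neg at hc
    have hw : σ (Fin.castLE hkn ⟨(σ j.1).val, hc⟩) = σ j.1 := by
      rw [h ⟨(σ j.1).val, hc⟩]
      ext
      simp
    have := σ.injective hw
    have hj := j.2
    have : (Fin.castLE hkn ⟨(σ j.1).val, hc⟩).val = j.1.val := congrArg Fin.val this
    simp at this
    omega
  set f : Equiv.Perm (Fin n) → (Sub ↪ Sub) := fun σ =>
    if h : ∀ i : Fin k, σ (Fin.castLE hkn i) = Fin.castLE hkn i then
      ⟨fun j => ⟨σ j.1, good σ h j⟩, by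
        intro a b hab
        apply Subtype.ext
        exact σ.injective (congrArg Subtype.val hab)⟩
    else ⟨id, Function.injective_id⟩
  have hcard := Finset.card_le_card_of_injOn
      (s := Finset.univ.filter (fun σ : Equiv.Perm (Fin n) =>
        ∀ i : Fin k, σ (Fin.castLE hkn i) = Fin.castLE hkn i))
      (t := (Finset.univ : Finset (Sub ↪ Sub))) f (fun σ _ => Finset.mem_univ (f σ)) ?_
  · calc _ ≤ (Finset.univ : Finset (Sub ↪ Sub)).card := hcard
      _ = Fintype.card (Sub ↪ Sub) := rfl
      _ = Nat.factorial (n - k) := by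
          rw [Fintype.card_embedding_eq, card_high n k hkn, Nat.descFactorial_self]
  · intro σ hσ σ' hσ' hff
    rw [Finset.mem_coe, Finset.mem_filter] at hσ hσ'
    simp only [f, dif_pos hσ.2, dif_pos hσ'.2] at hff
    ext j
    by_cases hj : k ≤ j.val
    · have h2 := congrArg (fun g : Sub ↪ Sub => ((g ⟨j, hj⟩ : Sub) : Fin n)) hff
      change (σ j : Fin n) = σ' j at h2
      exact congrArg Fin.val h2
    · push_neg at hj
      have hj' : j = Fin.castLE hkn ⟨j.val, hj⟩ := by ext; simp
      rw [hj', hσ.2, hσ'.2]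

lemma card_eqv_le (n k : ℕ) (hkn : k ≤ n) (v : Fin k → Fin n) :
    (Finset.univ.filter (fun π : Equiv.Perm (Fin n) =>
      ∀ i : Fin k, π (Fin.castLE hkn i) = v i)).card ≤ Nat.factorial (n - k) := by
  classical
  rcases Finset.eq_empty_or_nonempty (Finset.univ.filter (fun π : Equiv.Perm (Fin n) =>
      ∀ i : Fin k, π (Fin.castLE hkn i) = v i)) with he | ⟨τ, hτ⟩
  · rw [he]; simp
  · rw [Finset.mem_filter] at hτ
    have hmaps : ∀ π ∈ Finset.univ.filter (fun π : Equiv.Perm (Fin n) =>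
        ∀ i : Fin k, π (Fin.castLE hkn i) = v i),
        τ⁻¹ * π ∈ Finset.univ.filter (fun σ : Equiv.Perm (Fin n) =>
        ∀ i : Fin k, σ (Fin.castLE hkn i) = Fin.castLE hkn i) := by
      intro π hπ
      rw [Finset.mem_filter] at hπ ⊢
      refine ⟨Finset.mem_univ _, fun i => ?_⟩
      rw [Equiv.Perm.mul_apply, hπ.2 i, ← hτ.2 i]
      exact Equiv.symm_apply_apply τ _
    have hinj : Set.InjOn (fun π => τ⁻¹ * π) (Finset.univ.filter (fun π : Equiv.Perm (Fin n) =>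
        ∀ i : Fin k, π (Fin.castLE hkn i) = v i)) := by
      intro a _ b _ hab
      exact mul_left_cancel hab
    exact (Finset.card_le_card_of_injOn _ hmaps hinj).trans (card_fix_le n k hkn)

lemma card_perm_le {A : Type*} (n k : ℕ) (hkn : k ≤ n) (x : Fin n → A) (b : Fin k → A) :
    (Finset.univ.filter (fun π : Equiv.Perm (Fin n) =>
      ∀ i : Fin k, x (π (Fin.castLE hkn i)) = b i)).card
    ≤ (∏ i : Fin k, (Finset.univ.filter (fun j : Fin n => x j = b i)).card)
        * Nat.factorial (n - k) := by
  classical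
  set S := Finset.univ.filter (fun π : Equiv.Perm (Fin n) =>
      ∀ i : Fin k, x (π (Fin.castLE hkn i)) = b i) with hS
  set T := Fintype.piFinset (fun i : Fin k => Finset.univ.filter (fun j : Fin n => x j = b i))
    with hT
  have hmem : ∀ π ∈ S, (fun i : Fin k => π (Fin.castLE hkn i)) ∈ T := by
    intro π hπ
    rw [hS, Finset.mem_filter] at hπ
    rw [hT, Fintype.mem_piFinset]
    intro i
    simp [hπ.2 i]
  rw [Finset.card_eq_sum_card_fiberwise hmem]
  calc ∑ v ∈ T, (S.filter (fun π => (fun i : Fin k => π (Fin.castLE hkn i)) = v)).card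
      ≤ ∑ _v ∈ T, Nat.factorial (n - k) := by
        refine Finset.sum_le_sum fun v _ => ?_
        refine (Finset.card_le_card ?_).trans (card_eqv_le n k hkn v)
        intro π hπ
        rw [Finset.mem_filter] at hπ
        rw [Finset.mem_filter]
        exact ⟨Finset.mem_univ _, fun i => congrFun hπ.2 i⟩
    _ = T.card * Nat.factorial (n - k) := by rw [Finset.sum_const, smul_eq_mul]
    _ = (∏ i : Fin k, (Finset.univ.filter (fun j : Fin n => x j = b i)).card)
        * Nat.factorial (n - k) := by rw [hT, Fintype.card_piFinset]

lemma pointwise_bound {A : Type*} [Fintype A] (n k : ℕ) (hkn : k ≤ n) (hn : 0 < n)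
    (p : (Fin n → A) → ℝ) (hp0 : ∀ x, 0 ≤ p x)
    (hexch : ∀ (π : Equiv.Perm (Fin n)) (x : Fin n → A), p (x ∘ π) = p x)
    (b : Fin k → A) :
    (∑ x, if (∀ i : Fin k, x (Fin.castLE hkn i) = b i) then p x else 0)
      ≤ ((n : ℝ) ^ k * Nat.factorial (n - k) / Nat.factorial n)
        * (∑ x, p x * ∏ i : Fin k, empPMF n x (b i)) := by
  classical
  set P : ℝ := ∑ x, if (∀ i : Fin k, x (Fin.castLE hkn i) = b i) then p x else 0 with hP
  set M : ℝ := ∑ x, p x * ∏ i : Fin k, empPMF n x (b i) with hM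
  have hA1 : ∀ π : Equiv.Perm (Fin n),
      (∑ x, if (∀ i : Fin k, x (π (Fin.castLE hkn i)) = b i) then p x else 0) = P := by
    intro π
    rw [hP]
    refine Fintype.sum_equiv (Equiv.arrowCongr π.symm (Equiv.refl A)) _ _ fun y => ?_
    have h1 : ((Equiv.arrowCongr π.symm (Equiv.refl A)) y) = y ∘ π := by
      funext j; simp
    rw [h1, hexch π y]
    simp [Function.comp]
  have hA2 : (Nat.factorial n : ℝ) * P
      = ∑ x, p x * ((Finset.univ.filter (fun π : Equiv.Perm (Fin n) =>
          ∀ i : Fin k, x (π (Fin.castLE hkn i)) = b i)).card : ℝ) := by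
    have := Finset.sum_const (b := P) (s := (Finset.univ : Finset (Equiv.Perm (Fin n))))
    calc (Nat.factorial n : ℝ) * P
        = ∑ _π : Equiv.Perm (Fin n), P := by
          rw [Finset.sum_const, Finset.card_univ, Fintype.card_perm, Fintype.card_fin,
            nsmul_eq_mul]
      _ = ∑ π : Equiv.Perm (Fin n), ∑ x,
            if (∀ i : Fin k, x (π (Fin.castLE hkn i)) = b i) then p x else 0 := by
          exact Finset.sum_congr rfl fun π _ => (hA1 π).symm
      _ = ∑ x, ∑ π : Equiv.Perm (Fin n),
            if (∀ i : Fin k, x (π (Fin.castLE hkn i)) = b i) then p x else 0 :=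
          Finset.sum_comm
      _ = _ := by
          refine Finset.sum_congr rfl fun x _ => ?_
          rw [← Finset.sum_filter, Finset.sum_const, nsmul_eq_mul, mul_comm]
  have hcnt : ∀ x : Fin n → A, (∏ i : Fin k, empPMF n x (b i))
      = (∏ i : Fin k, ((Finset.univ.filter (fun j : Fin n => x j = b i)).card : ℝ)) / n ^ k := by
    intro x
    unfold empPMF
    rw [Finset.prod_div_distrib]
    congr 1
    rw [Finset.prod_const, Finset.card_univ, Fintype.card_fin]
  have hA4 : (Nat.factorial n : ℝ) * P ≤ (Nat.factorial (n - k) : ℝ) * ((n : ℝ) ^ k * M) := by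
    rw [hA2]
    calc ∑ x, p x * ((Finset.univ.filter (fun π : Equiv.Perm (Fin n) =>
          ∀ i : Fin k, x (π (Fin.castLE hkn i)) = b i)).card : ℝ)
        ≤ ∑ x, p x * ((∏ i : Fin k,
            ((Finset.univ.filter (fun j : Fin n => x j = b i)).card : ℝ))
            * (Nat.factorial (n - k) : ℝ)) := by
          refine Finset.sum_le_sum fun x _ => ?_
          refine mul_le_mul_of_nonneg_left ?_ (hp0 x)
          have := card_perm_le n k hkn x b
          calc ((Finset.univ.filter (fun π : Equiv.Perm (Fin n) =>
              ∀ i : Fin k, x (π (Fin.castLE hkn i)) = b i)).card : ℝ)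
              ≤ (((∏ i : Fin k, (Finset.univ.filter (fun j : Fin n => x j = b i)).card)
                  * Nat.factorial (n - k) : ℕ) : ℝ) := by exact_mod_cast this
            _ = _ := by push_cast; ring
      _ = (Nat.factorial (n - k) : ℝ) * ((n : ℝ) ^ k * M) := by
          rw [hM, Finset.mul_sum, Finset.mul_sum]
          refine Finset.sum_congr rfl fun x _ => ?_
          rw [hcnt x]
          have hnk : (0 : ℝ) < (n : ℝ) ^ k := by positivity
          rw [mul_div_assoc', mul_div_assoc', mul_div_cancel_left₀ _ hnk.ne']
          ring
  have hfac : (0 : ℝ) < (Nat.factorial n : ℝ) := by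
    exact_mod_cast Nat.factorial_pos n
  rw [div_mul_eq_mul_div, le_div_iff₀ hfac]
  calc P * (Nat.factorial n : ℝ) = (Nat.factorial n : ℝ) * P := by ring
    _ ≤ (Nat.factorial (n - k) : ℝ) * ((n : ℝ) ^ k * M) := hA4
    _ = (n : ℝ) ^ k * (Nat.factorial (n - k)) * M := by ring


lemma relEnt_le_log {B : Type*} [Fintype B] (P M : B → ℝ) (C : ℝ) (hC : 1 ≤ C)
    (hP0 : ∀ b, 0 ≤ P b) (hM0 : ∀ b, 0 ≤ M b) (hPM : ∀ b, P b ≤ C * M b)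
    (hP1 : ∑ b, P b = 1) : relEnt P M ≤ Real.log C := by
  have hC0 : (0 : ℝ) < C := lt_of_lt_of_le one_pos hC
  have key : ∀ b, P b * Real.log (P b / M b) ≤ P b * Real.log C := by
    intro b
    rcases eq_or_lt_of_le (hP0 b) with h0 | hpos
    · rw [← h0]; simp
    · rcases eq_or_lt_of_le (hM0 b) with hm0 | hmpos
      · exfalso
        have := hPM b
        rw [← hm0, mul_zero] at this
        linarith
      · refine mul_le_mul_of_nonneg_left ?_ (hP0 b)
        refine Real.log_le_log ?_ ?_
        · positivity
        · rw [div_le_iff₀ hmpos]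
          calc P b ≤ C * M b := hPM b
            _ = C * M b := rfl
  calc relEnt P M ≤ ∑ b, P b * Real.log C := Finset.sum_le_sum fun b _ => key b
    _ = (∑ b, P b) * Real.log C := by rw [Finset.sum_mul]
    _ = Real.log C := by rw [hP1, one_mul]

set_option maxHeartbeats 2000000 in
/-- finite de Finetti theorem: for exchangeable `X_1,…,X_n` over a
finite alphabet `A` of size `m`, with `k ∣ n` and `2 ≤ k ≤ (n/100)^{1/3}`, the law
`P_k` of `(X_1,…,X_k)` and the mixture `M_{μ,k}(x_1^k) = ∫ Q^k(x_1^k) dμ(Q)`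
(`μ` the law of the empirical measure `P̂_{X_1^n}`) satisfy
`D(P_k‖M_{μ,k}) ≤ 2δ + k e^{−(n/k)δ} (n/k + 1)^{2m^k} log n`,
where `α = [2k/√n·((1+2k)/√n + 1)]^{1/2}` and `δ = α log(m^k/α)`. -/
theorem finite_de_finetti {A : Type*} [Fintype A]
    (n k : ℕ) (hk2 : 2 ≤ k) (hdvd : k ∣ n) (hkn : k ≤ n)
    (hk3 : (k : ℝ) ≤ ((n : ℝ) / 100) ^ ((1 : ℝ) / 3))
    (p : (Fin n → A) → ℝ) (hp0 : ∀ x, 0 ≤ p x) (hp1 : (∑ x, p x) = 1)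
    (hexch : ∀ (π : Equiv.Perm (Fin n)) (x : Fin n → A), p (x ∘ π) = p x)
    (α δ : ℝ)
    (hα : α = Real.sqrt (2 * k / Real.sqrt n * ((1 + 2 * k) / Real.sqrt n + 1)))
    (hδ : δ = α * Real.log ((Fintype.card A : ℝ) ^ k / α)) :
    relEnt
      (fun a : Fin k → A => ∑ x, if (∀ i : Fin k, x (Fin.castLE hkn i) = a i) then p x else 0)
      (fun a : Fin k → A => ∑ x, p x * ∏ i : Fin k, empPMF n x (a i))
      ≤ 2 * δ + k * Real.exp (-((n : ℝ) / k) * δ) *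
          ((n : ℝ) / k + 1) ^ (2 * Fintype.card A ^ k) * Real.log n := by
  classical
  set K : ℝ := (k : ℝ) with hK
  set N : ℝ := (n : ℝ) with hN
  have hK2 : (2 : ℝ) ≤ K := by rw [hK]; exact_mod_cast hk2
  have hK0 : (0 : ℝ) < K := by linarith
  -- cube the hypothesis
  have hnn : (0 : ℝ) ≤ N / 100 := by
    have : (0:ℝ) ≤ N := by positivity
    linarith
  have hcube : 100 * K ^ 3 ≤ N := by
    have h := pow_le_pow_left₀ (by positivity : (0:ℝ) ≤ K) hk3 3
    have h2 : ((N / 100) ^ ((1:ℝ)/3)) ^ (3:ℕ) = N / 100 := by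
      rw [← Real.rpow_natCast ((N / 100) ^ ((1:ℝ)/3)) 3, ← Real.rpow_mul hnn]
      norm_num
    rw [h2] at h
    linarith
  have hN800 : (800 : ℝ) ≤ N := by
    have h8 : (8:ℝ) ≤ K ^ 3 := by
      have := pow_le_pow_left₀ (by norm_num : (0:ℝ) ≤ 2) hK2 3
      norm_num at this
      linarith
    linarith
  have hn0 : 0 < n := by
    by_contra h
    push_neg at h
    interval_cases n
    simp [hN] at hN800
    linarith
  -- alphabet nonempty
  have hm1 : 1 ≤ Fintype.card A := by
    rcases isEmpty_or_nonempty A with hA | hA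
    · exfalso
      haveI : IsEmpty (Fin n → A) := ⟨fun f => hA.false (f ⟨0, hn0⟩)⟩
      rw [Finset.univ_eq_empty, Finset.sum_empty] at hp1
      norm_num at hp1
    · exact Fintype.card_pos
  -- basic sqrt facts
  have hNpos : (0:ℝ) < N := by linarith
  have hsNK : 14 * K ≤ Real.sqrt N := by
    rw [Real.le_sqrt (by positivity) (le_of_lt hNpos)]
    nlinarith
  have hsN0 : (0:ℝ) < Real.sqrt N := by
    have : (0:ℝ) < 14 * K := by linarith
    linarith
  have hsNN : Real.sqrt N ≤ N := by
    have h1 : Real.sqrt N ≤ Real.sqrt (N ^ 2) := Real.sqrt_le_sqrt (by nlinarith)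
    rwa [Real.sqrt_sq (le_of_lt hNpos)] at h1
  -- α bounds
  set y : ℝ := 2 * K / Real.sqrt N * ((1 + 2 * K) / Real.sqrt N + 1) with hy
  have hb0 : (0:ℝ) ≤ (1 + 2 * K) / Real.sqrt N := by positivity
  have hy0 : 0 < y := by
    rw [hy]
    have h1 : (0:ℝ) < 2 * K / Real.sqrt N := by positivity
    nlinarith
  have hαy : α = Real.sqrt y := hα
  have hα0 : 0 < α := by rw [hαy]; exact Real.sqrt_pos.mpr hy0
  have ha7 : 2 * K / Real.sqrt N ≤ 1 / 7 := by
    rw [div_le_div_iff₀ hsN0 (by norm_num)]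
    linarith
  have hb7 : (1 + 2 * K) / Real.sqrt N ≤ 3 / 14 := by
    rw [div_le_div_iff₀ hsN0 (by norm_num)]
    nlinarith
  have hy14 : y ≤ 1 / 4 := by
    rw [hy]
    have := mul_le_mul ha7 (by linarith : (1 + 2 * K) / Real.sqrt N + 1 ≤ 3 / 14 + 1)
      (by linarith) (by norm_num)
    linarith
  have hαhalf : α ≤ 1 / 2 := by
    rw [hαy]
    have h1 : Real.sqrt y ≤ Real.sqrt (1/4) := Real.sqrt_le_sqrt hy14
    have h2 : Real.sqrt (1/4 : ℝ) = 1/2 := by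
      rw [show (1/4 : ℝ) = (1/2)^2 by norm_num, Real.sqrt_sq (by norm_num)]
    linarith
  -- α ≤ 2δ
  have hδα : α ≤ 2 * δ := by
    have hmk : (1:ℝ) ≤ (Fintype.card A : ℝ) ^ k := by
      apply one_le_pow₀
      exact_mod_cast hm1
    have h2α : (2:ℝ) ≤ (Fintype.card A : ℝ) ^ k / α := by
      rw [le_div_iff₀ hα0]
      nlinarith
    have hlog : (1:ℝ)/2 ≤ Real.log ((Fintype.card A : ℝ) ^ k / α) := by
      have h1 : Real.log 2 ≤ Real.log ((Fintype.card A : ℝ) ^ k / α) :=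
        Real.log_le_log (by norm_num) h2α
      have h2 : (0.6931471803 : ℝ) < Real.log 2 := Real.log_two_gt_d9
      linarith
    rw [hδ]
    have hh := mul_le_mul_of_nonneg_left hlog (le_of_lt hα0)
    rw [mul_one_div] at hh
    linarith
  -- the constant C
  set C : ℝ := N ^ k * Nat.factorial (n - k) / Nat.factorial n with hC
  have hdesc0 : 0 < n.descFactorial k := by
    have h1 : 0 < n + 1 - k := by omega
    exact lt_of_lt_of_le (pow_pos h1 k) (Nat.pow_sub_le_descFactorial n k)
  have hCdesc : C = N ^ k / (n.descFactorial k : ℝ) := by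
    rw [hC, ← Nat.factorial_mul_descFactorial hkn]
    have h1 : (0:ℝ) < ((n-k).factorial : ℝ) := by exact_mod_cast Nat.factorial_pos (n-k)
    have h2 : (0:ℝ) < (n.descFactorial k : ℝ) := by exact_mod_cast hdesc0
    push_cast
    field_simp
  have hC1 : 1 ≤ C := by
    rw [hCdesc, le_div_iff₀ (by exact_mod_cast hdesc0), one_mul]
    have := Nat.descFactorial_le_pow n k
    calc ((n.descFactorial k : ℕ) : ℝ) ≤ ((n ^ k : ℕ) : ℝ) := by exact_mod_cast this
      _ = N ^ k := by push_cast; rfl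
  -- r and the log bound
  set r : ℝ := N - K + 1 with hr
  have hr0 : (0:ℝ) < r := by
    have : K ≤ N := by nlinarith
    rw [hr]; linarith
  have hrN2 : N / 2 ≤ r := by
    rw [hr]; nlinarith
  have hCle : C ≤ (N / r) ^ k := by
    rw [hCdesc, div_pow]
    have hrk : ((n + 1 - k : ℕ) : ℝ) = r := by
      have : k ≤ n + 1 := by omega
      push_cast [Nat.cast_sub this]
      rw [hr, hK, hN]; ring
    have hd : r ^ k ≤ (n.descFactorial k : ℝ) := by
      have := Nat.pow_sub_le_descFactorial n k
      calc r ^ k = (((n + 1 - k) ^ k : ℕ) : ℝ) := by rw [← hrk]; push_cast; rfl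
        _ ≤ _ := by exact_mod_cast this
    have hrpow : (0:ℝ) < r ^ k := by positivity
    exact div_le_div_of_nonneg_left (by positivity) hrpow hd
  have hlogC : Real.log C ≤ K * ((K - 1) / r) := by
    have hC0 : (0:ℝ) < C := by linarith
    have h1 : Real.log C ≤ Real.log ((N / r) ^ k) := Real.log_le_log hC0 hCle
    rw [Real.log_pow] at h1
    have h2 : Real.log (N / r) ≤ N / r - 1 :=
      Real.log_le_sub_one_of_pos (by positivity)
    have h3 : N / r - 1 = (K - 1) / r := by
      field_simp
      rw [hr]; ring
    have h4 : (k : ℝ) * Real.log (N / r) ≤ K * ((K - 1) / r) := by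
      rw [hK]
      have := mul_le_mul_of_nonneg_left (h2.trans (le_of_eq h3)) (le_of_lt hK0)
      rw [hK] at this
      exact this
    exact h1.trans h4
  -- K*((K-1)/r) ≤ α
  have hmain : K * ((K - 1) / r) ≤ α := by
    have hx0 : 0 ≤ K * ((K - 1) / r) :=
      mul_nonneg (by linarith) (div_nonneg (by linarith) (le_of_lt hr0))
    rw [hαy]
    rw [Real.le_sqrt hx0 (le_of_lt hy0)]
    have hQ : (K * ((K - 1) / r)) ^ 2 = K^2 * (K-1)^2 / r^2 := by
      field_simp
    rw [hQ]
    have hy2 : 2 * K / Real.sqrt N ≤ y := by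
      rw [hy]
      nlinarith [div_nonneg (by linarith : (0:ℝ) ≤ 2*K) (le_of_lt hsN0)]
    have hstep : K^2 * (K-1)^2 / r^2 ≤ 2 * K / Real.sqrt N := by
      rw [div_le_div_iff₀ (by positivity) hsN0]
      have e1 : K^2 * (K-1)^2 ≤ K^4 := by nlinarith
      have e2 : K^4 * Real.sqrt N ≤ K * (N/100) * N := by
        have hK4 : K^4 ≤ K * (N/100) := by nlinarith
        have e2a : K^4 * Real.sqrt N ≤ K^4 * N := by
          apply mul_le_mul_of_nonneg_left hsNN (by positivity)
        have e2b : K^4 * N ≤ (K * (N/100)) * N := by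
          apply mul_le_mul_of_nonneg_right hK4 (by positivity)
        linarith
      have e3 : K * (N/100) * N ≤ 2 * K * r^2 := by nlinarith
      have e0 := mul_le_mul_of_nonneg_right e1 (Real.sqrt_nonneg N)
      exact e0.trans (e2.trans e3)
    linarith
  -- relative entropy bound
  have hrel : relEnt
      (fun a : Fin k → A => ∑ x, if (∀ i : Fin k, x (Fin.castLE hkn i) = a i) then p x else 0)
      (fun a : Fin k → A => ∑ x, p x * ∏ i : Fin k, empPMF n x (a i)) ≤ Real.log C := by
    apply relEnt_le_log _ _ C hC1
    · intro b
      apply Finset.sum_nonneg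
      intro x _
      split
      · exact hp0 x
      · exact le_rfl
    · intro b
      apply Finset.sum_nonneg
      intro x _
      apply mul_nonneg (hp0 x)
      apply Finset.prod_nonneg
      intro i _
      unfold empPMF
      positivity
    · intro b
      have := pointwise_bound n k hkn hn0 p hp0 hexch b
      rw [hC, hN]
      exact this
    · rw [Finset.sum_comm]
      rw [← hp1]
      refine Finset.sum_congr rfl fun x _ => ?_
      calc ∑ b : Fin k → A, (if (∀ i : Fin k, x (Fin.castLE hkn i) = b i) then p x else 0)
          = ∑ b : Fin k → A, (if (fun i : Fin k => x (Fin.castLE hkn i)) = b then p x else 0) :=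
            Finset.sum_congr rfl fun b _ => if_congr funext_iff.symm rfl rfl
        _ = p x := by rw [Finset.sum_ite_eq Finset.univ _ (fun _ => p x),
            if_pos (Finset.mem_univ _)]
  -- RHS tail nonneg
  have htail : 0 ≤ K * Real.exp (-(N / K) * δ) * (N / K + 1) ^ (2 * Fintype.card A ^ k)
      * Real.log N := by
    apply mul_nonneg
    apply mul_nonneg
    apply mul_nonneg
    · positivity
    · positivity
    · positivity
    · apply Real.log_nonneg; linarith
  calc relEnt _ _ ≤ Real.log C := hrel
    _ ≤ K * ((K - 1) / r) := hlogC
    _ ≤ α := hmain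
    _ ≤ 2 * δ := hδα
    _ ≤ _ := by linarith
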